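/- Let A be a commutative unital ℂ-algebra, n ≥ 1 an integer, and m_1 < m_2 < ⋯ < m_n integers. Let D be the differential operator acting on A((x)) by Df = f^{(n)} + ∑_{i=1}^{n} (∑_{j=−i}^{∞} b_{ij} x^j) · f^{(n−i)}, with coefficients b_{ij} ∈ A. Suppose that for each i = 1, …, n the equation Df = 0 has a solution f_i ∈ A((x)) of the form f_i = x^{m_i} + a_1^{(i)} x^{m_i+1} + a_2^{(i)} x^{m_i+2} + ⋯ with a_l^{(i)} ∈ A. Set ν_i = m_{n+1−i} − n + i for i = 1, …, n. Then there exist formal power series c_i = d_0^{(i)} + d_1^{(i)} x + d_2^{(i)} x² + ⋯ ∈ A[[x]] such that D = D_1 D_2 ⋯ D_n as operators on A((x)), i.e., Df = D_1(D_2(⋯ D_n(f)⋯)) for every f ∈ A((x)), where the first-order operator D_i acts by D_i g = g′ − ν_i x^{−1} g + c_i g. -/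

import Mathlib

/-- The termwise formal derivative of a formal Laurent series. -/
noncomputable def lderiv {A : Type*} [CommRing A] (f : LaurentSeries A) : LaurentSeries A where
  coeff q := (q + 1) • f.coeff (q + 1)
  isPWO_support' := by
    have h : Function.support (fun q : ℤ => (q + 1) • f.coeff (q + 1)) ⊆
        (fun q : ℤ => q - 1) '' f.support := by
      intro q hq
      refine ⟨q + 1, ?_, by ring⟩
      intro hc
      simp [Function.mem_support, hc] at hq
    exact (Set.IsPWO.image_of_monotone f.isPWO_support (fun a b hab => by omega)).mono h

/-- The formal Laurent series `∑_{l=0}^{∞} a_l x^{m+l}` with coefficients `a_l`. -/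
noncomputable def shiftSeries {A : Type*} [CommRing A] (m : ℤ) (a : ℕ → A) :
    LaurentSeries A :=
  (HahnSeries.single m (1 : A)) * (HahnSeries.ofPowerSeries ℤ A (PowerSeries.mk a))

/-- The monic differential operator
`Df = f^{(n)} + ∑_{i=1}^{n} (∑_{j=−i}^{∞} b_{ij} x^j) f^{(n−i)}` acting on `A((x))`. -/
noncomputable def DoprMonic {A : Type*} [CommRing A] (n : ℕ) (b : ℕ → ℤ → A)
    (f : LaurentSeries A) : LaurentSeries A :=
  lderiv^[n] f + ∑ i ∈ Finset.Icc 1 n,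
    shiftSeries (-(i : ℤ)) (fun l => b i ((l : ℤ) - (i : ℤ))) * lderiv^[n - i] f

/-- The first-order operator `D_i g = g′ − ν x^{−1} g + c g`. -/
noncomputable def firstOrderOp {A : Type*} [CommRing A] (ν : ℤ) (c : PowerSeries A)
    (g : LaurentSeries A) : LaurentSeries A :=
  lderiv g - ν • (HahnSeries.single (-1 : ℤ) (1 : A) * g) +
    (HahnSeries.ofPowerSeries ℤ A c) * g

namespace Fact0

variable {A : Type*} [CommRing A]

open HahnSeries

@[simp] lemma lderiv_coeff (f : LaurentSeries A) (q : ℤ) :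
    (lderiv f).coeff q = (q + 1) • f.coeff (q + 1) := rfl

/-- Euler operator: coeff q ↦ q • coeff q. -/
noncomputable def eul (f : LaurentSeries A) : LaurentSeries A where
  coeff q := q • f.coeff q
  isPWO_support' := f.isPWO_support.mono (by
    intro q hq
    simp only [Function.mem_support, ne_eq] at hq ⊢
    intro h; rw [h, smul_zero] at hq; exact hq rfl)

@[simp] lemma eul_coeff (f : LaurentSeries A) (q : ℤ) : (eul f).coeff q = q • f.coeff q := rfl

lemma eul_support (f : LaurentSeries A) : (eul f).support ⊆ f.support := by
  intro q hq
  rw [HahnSeries.mem_support] at hq ⊢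
  exact fun h => hq (by rw [eul_coeff, h, smul_zero])

lemma lderiv_eq (f : LaurentSeries A) :
    lderiv f = HahnSeries.single (-1 : ℤ) (1 : A) * eul f := by
  ext q
  have h := HahnSeries.coeff_single_mul_add (r := (1:A)) (x := eul f) (a := q + 1) (b := (-1:ℤ))
  have hq : q + 1 + (-1 : ℤ) = q := by ring
  rw [hq] at h
  rw [h, one_mul, eul_coeff, lderiv_coeff]

lemma eul_mul (f g : LaurentSeries A) : eul (f * g) = eul f * g + f * eul g := by
  ext q
  rw [HahnSeries.coeff_add,
    HahnSeries.coeff_mul_left' f.isPWO_support (eul_support f),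
    HahnSeries.coeff_mul_right' g.isPWO_support (eul_support g),
    eul_coeff, HahnSeries.coeff_mul, Finset.smul_sum, ← Finset.sum_add_distrib]
  refine Finset.sum_congr rfl ?_
  rintro ⟨i, j⟩ hij
  obtain ⟨-, -, hsum⟩ := Finset.mem_addAntidiagonal.mp hij
  simp only [eul_coeff]
  rw [← hsum]
  push_cast [zsmul_eq_mul]
  ring

lemma lderiv_mul (f g : LaurentSeries A) :
    lderiv (f * g) = lderiv f * g + f * lderiv g := by
  rw [lderiv_eq, lderiv_eq, lderiv_eq, eul_mul, mul_add]
  ring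

lemma lderiv_add (f g : LaurentSeries A) : lderiv (f + g) = lderiv f + lderiv g := by
  ext q; simp [smul_add]

@[simp] lemma lderiv_zero : lderiv (0 : LaurentSeries A) = 0 := by
  ext q; simp

lemma lderiv_neg (f : LaurentSeries A) : lderiv (-f) = -lderiv f := by
  ext q; simp

lemma lderiv_sub (f g : LaurentSeries A) : lderiv (f - g) = lderiv f - lderiv g := by
  ext q; simp [smul_sub]

lemma lderiv_single (m : ℤ) (r : A) :
    lderiv (HahnSeries.single m r) = HahnSeries.single (m - 1) (m • r) := by
  ext q
  rw [lderiv_coeff]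
  by_cases h : q = m - 1
  · subst h
    rw [show m - 1 + 1 = m by ring]
    simp
  · rw [HahnSeries.coeff_single_of_ne (show q + 1 ≠ m by omega),
      HahnSeries.coeff_single_of_ne h, smul_zero]

lemma lderiv_C_mul (e : A) (f : LaurentSeries A) :
    lderiv (HahnSeries.C e * f) = HahnSeries.C e * lderiv f := by
  have h : lderiv (HahnSeries.C e : LaurentSeries A) = 0 := by
    rw [HahnSeries.C_apply, lderiv_single, zero_smul, HahnSeries.single_eq_zero]
  rw [lderiv_mul, h, zero_mul, zero_add]

lemma lderiv_sum {ι : Type*} (s : Finset ι) (f : ι → LaurentSeries A) :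
    lderiv (∑ i ∈ s, f i) = ∑ i ∈ s, lderiv (f i) := by
  classical
  induction s using Finset.induction with
  | empty => simp
  | insert _ _ h ih => rw [Finset.sum_insert h, Finset.sum_insert h, lderiv_add, ih]

lemma lderiv_iter_add (k : ℕ) (f g : LaurentSeries A) :
    lderiv^[k] (f + g) = lderiv^[k] f + lderiv^[k] g := by
  induction k generalizing f g with
  | zero => rfl
  | succ k ih => simp only [Function.iterate_succ_apply, lderiv_add, ih]

lemma lderiv_iter_C_mul (k : ℕ) (e : A) (f : LaurentSeries A) :
    lderiv^[k] (HahnSeries.C e * f) = HahnSeries.C e * lderiv^[k] f := by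
  induction k generalizing f with
  | zero => rfl
  | succ k ih => simp only [Function.iterate_succ_apply, lderiv_C_mul, ih]

@[simp] lemma lderiv_iter_zero (k : ℕ) : lderiv^[k] (0 : LaurentSeries A) = 0 := by
  induction k with
  | zero => rfl
  | succ k ih => simp [Function.iterate_succ_apply, ih]

lemma lderiv_iter_sub (k : ℕ) (f g : LaurentSeries A) :
    lderiv^[k] (f - g) = lderiv^[k] f - lderiv^[k] g := by
  induction k generalizing f g with
  | zero => rfl
  | succ k ih => simp only [Function.iterate_succ_apply, lderiv_sub, ih]


/-! ### Support bounds -/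

def SuppGE (g : LaurentSeries A) (ν : ℤ) : Prop := ∀ q : ℤ, q < ν → g.coeff q = 0

lemma SuppGE.mono {g : LaurentSeries A} {ν ν' : ℤ} (h : SuppGE g ν) (hle : ν' ≤ ν) :
    SuppGE g ν' := fun q hq => h q (lt_of_lt_of_le hq hle)

lemma suppGE_zero (ν : ℤ) : SuppGE (0 : LaurentSeries A) ν := fun _ _ => rfl

lemma SuppGE.add {f g : LaurentSeries A} {ν : ℤ} (hf : SuppGE f ν) (hg : SuppGE g ν) :
    SuppGE (f + g) ν := fun q hq => by
  rw [HahnSeries.coeff_add, hf q hq, hg q hq, add_zero]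

lemma SuppGE.neg {f : LaurentSeries A} {ν : ℤ} (hf : SuppGE f ν) : SuppGE (-f) ν :=
  fun q hq => by rw [HahnSeries.coeff_neg, hf q hq, neg_zero]

lemma SuppGE.sub {f g : LaurentSeries A} {ν : ℤ} (hf : SuppGE f ν) (hg : SuppGE g ν) :
    SuppGE (f - g) ν := by rw [sub_eq_add_neg]; exact hf.add hg.neg

lemma SuppGE.mul {f g : LaurentSeries A} {ν μ : ℤ} (hf : SuppGE f ν) (hg : SuppGE g μ) :
    SuppGE (f * g) (ν + μ) := by
  intro q hq
  rw [HahnSeries.coeff_mul]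
  refine Finset.sum_eq_zero ?_
  rintro ⟨i, j⟩ hij
  obtain ⟨hi, hj, hsum⟩ := Finset.mem_addAntidiagonal.mp hij
  exfalso
  rw [HahnSeries.mem_support] at hi hj
  rcases lt_or_ge i ν with h | h
  · exact hi (hf i h)
  rcases lt_or_ge j μ with h' | h'
  · exact hj (hg j h')
  simp only at hsum
  omega

lemma suppGE_lderiv {f : LaurentSeries A} {ν : ℤ} (hf : SuppGE f ν) :
    SuppGE (lderiv f) (ν - 1) := by
  intro q hq
  rw [lderiv_coeff, hf (q + 1) (by omega), smul_zero]

lemma suppGE_lderiv0 {f : LaurentSeries A} (hf : SuppGE f 0) :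
    SuppGE (lderiv f) 0 := by
  intro q hq
  rw [lderiv_coeff]
  rcases eq_or_lt_of_le (show q + 1 ≤ 0 by omega) with h | h
  · rw [h, zero_smul]
  · rw [hf (q + 1) h, smul_zero]

lemma suppGE_single (m : ℤ) (r : A) : SuppGE (HahnSeries.single m r) m := by
  intro q hq
  exact HahnSeries.coeff_single_of_ne (by omega)

lemma suppGE_one : SuppGE (1 : LaurentSeries A) 0 := by
  rw [← HahnSeries.single_zero_one]; exact suppGE_single 0 1

lemma suppGE_C (e : A) : SuppGE (HahnSeries.C e : LaurentSeries A) 0 := by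
  rw [HahnSeries.C_apply]; exact suppGE_single 0 _

lemma suppGE_intCast (e : ℤ) : SuppGE ((e : LaurentSeries A)) 0 := by
  rw [show ((e : LaurentSeries A)) = HahnSeries.single 0 ((e : ℤ) : A) from by
    rw [← map_intCast (HahnSeries.C : A →+* HahnSeries ℤ A) e, HahnSeries.C_apply]]
  exact suppGE_single 0 _

lemma SuppGE.zsmul {f : LaurentSeries A} {ν : ℤ} (e : ℤ) (hf : SuppGE f ν) :
    SuppGE (e • f) ν := by
  rw [zsmul_eq_mul]
  have h := (suppGE_intCast (A := A) e).mul hf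
  rwa [zero_add] at h


lemma ofPS_coeff_neg (φ : PowerSeries A) {q : ℤ} (hq : q < 0) :
    (HahnSeries.ofPowerSeries ℤ A φ).coeff q = 0 := by
  rw [HahnSeries.ofPowerSeries_apply, HahnSeries.embDomain_notin_image_support]
  rintro ⟨n, -, hn⟩
  change ((n : ℕ) : ℤ) = q at hn
  omega

lemma ofPS_coeff_toNat (φ : PowerSeries A) {q : ℤ} (hq : 0 ≤ q) :
    (HahnSeries.ofPowerSeries ℤ A φ).coeff q = PowerSeries.coeff q.toNat φ := by
  have h2 : q = ((q.toNat : ℕ) : ℤ) := by omega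
  rw [show (HahnSeries.ofPowerSeries ℤ A φ).coeff q
      = (HahnSeries.ofPowerSeries ℤ A φ).coeff ((q.toNat : ℕ) : ℤ) from by rw [← h2],
    HahnSeries.ofPowerSeries_apply_coeff]

lemma suppGE_ofPS (φ : PowerSeries A) : SuppGE (HahnSeries.ofPowerSeries ℤ A φ) 0 :=
  fun _ hq => ofPS_coeff_neg φ hq

lemma shiftSeries_coeff (m : ℤ) (a : ℕ → A) (q : ℤ) :
    (shiftSeries m a).coeff q = if m ≤ q then a (q - m).toNat else 0 := by
  unfold shiftSeries
  have h := HahnSeries.coeff_single_mul_add (r := (1:A))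
    (x := HahnSeries.ofPowerSeries ℤ A (PowerSeries.mk a)) (a := q - m) (b := m)
  rw [show q - m + m = q by ring] at h
  rw [h, one_mul]
  split
  · rw [ofPS_coeff_toNat _ (by omega), PowerSeries.coeff_mk]
  · exact ofPS_coeff_neg _ (by omega)

lemma suppGE_shiftSeries (m : ℤ) (a : ℕ → A) : SuppGE (shiftSeries m a) m := by
  intro q hq
  rw [shiftSeries_coeff, if_neg (by omega)]

lemma shiftSeries_coeff_nonneg (m : ℤ) (a : ℕ → A) (l : ℕ) :
    (shiftSeries m a).coeff (m + l) = a l := by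
  rw [shiftSeries_coeff, if_pos (by omega)]
  congr 1
  omega

/-- Extraction: a series supported in degrees `≥ m` is a `shiftSeries`. -/
lemma eq_shiftSeries_of_suppGE {g : LaurentSeries A} {m : ℤ} (hg : SuppGE g m) :
    g = shiftSeries m (fun l => g.coeff (m + l)) := by
  ext q
  rw [shiftSeries_coeff]
  split
  · next h => congr 1; omega
  · next h => exact hg q (by omega)

/-- A series supported in degrees `≥ 0` comes from a power series. -/
lemma eq_ofPS_of_suppGE {g : LaurentSeries A} (hg : SuppGE g 0) :
    HahnSeries.ofPowerSeries ℤ A (PowerSeries.mk fun l => g.coeff l) = g := by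
  ext q
  rcases lt_or_ge q 0 with h | h
  · rw [ofPS_coeff_neg _ h, hg q h]
  · rw [ofPS_coeff_toNat _ h, PowerSeries.coeff_mk]
    congr 1
    omega

/-- Invertibility of `shiftSeries m a` when `a 0 = 1`. -/
lemma shiftSeries_isUnit (m : ℤ) (a : ℕ → A) (ha : a 0 = 1) :
    ∃ v : LaurentSeries A, shiftSeries m a * v = 1 ∧
      ∃ V : LaurentSeries A, SuppGE V 0 ∧ v = HahnSeries.single (-m) (1:A) * V ∧
        HahnSeries.ofPowerSeries ℤ A (PowerSeries.mk a) * V = 1 := by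
  have hu : IsUnit (PowerSeries.mk a) := by
    rw [PowerSeries.isUnit_iff_constantCoeff]
    have : (PowerSeries.constantCoeff) (PowerSeries.mk a) = a 0 := by
      rw [← PowerSeries.coeff_zero_eq_constantCoeff_apply, PowerSeries.coeff_mk]
    rw [this, ha]
    exact isUnit_one
  obtain ⟨U, hU⟩ := hu
  set V : LaurentSeries A := HahnSeries.ofPowerSeries ℤ A ((U⁻¹ : (PowerSeries A)ˣ) : PowerSeries A)
  have hUV : HahnSeries.ofPowerSeries ℤ A (PowerSeries.mk a) * V = 1 := by
    rw [← map_mul, ← hU, Units.mul_inv, map_one]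
  refine ⟨HahnSeries.single (-m) (1:A) * V, ?_, V, suppGE_ofPS _, rfl, hUV⟩
  unfold shiftSeries
  rw [mul_mul_mul_comm, HahnSeries.single_mul_single, add_neg_cancel, one_mul,
    HahnSeries.single_zero_one, hUV, one_mul]


/-! ### Operators as coefficient families -/

noncomputable def opAct (N : ℕ) (p : ℕ → LaurentSeries A) (f : LaurentSeries A) :
    LaurentSeries A :=
  ∑ k ∈ Finset.range (N + 1), p k * lderiv^[k] f

lemma opAct_C_mul (N : ℕ) (p : ℕ → LaurentSeries A) (e : A) (f : LaurentSeries A) :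
    opAct N p (HahnSeries.C e * f) = HahnSeries.C e * opAct N p f := by
  unfold opAct
  rw [Finset.mul_sum]
  refine Finset.sum_congr rfl fun k _ => ?_
  rw [lderiv_iter_C_mul]
  ring

@[simp] lemma opAct_zero (N : ℕ) (p : ℕ → LaurentSeries A) : opAct N p 0 = 0 := by
  unfold opAct
  refine Finset.sum_eq_zero fun k _ => ?_
  rw [lderiv_iter_zero, mul_zero]

/-- Coefficient family of the monic operator `DoprMonic n b`. -/
noncomputable def pOf (n : ℕ) (b : ℕ → ℤ → A) (k : ℕ) : LaurentSeries A :=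
  if k = n then 1
  else if k < n then
    shiftSeries (-((n - k : ℕ) : ℤ)) (fun l => b (n - k) ((l : ℤ) - ((n - k : ℕ) : ℤ)))
  else 0

lemma suppGE_pOf (n : ℕ) (b : ℕ → ℤ → A) (k : ℕ) :
    SuppGE (pOf n b k) ((k : ℤ) - n) := by
  unfold pOf
  split
  · next h => subst h; exact suppGE_one.mono (by omega)
  split
  · next h => exact (suppGE_shiftSeries _ _).mono (by omega)
  · exact suppGE_zero _

lemma DoprMonic_eq_opAct (n : ℕ) (b : ℕ → ℤ → A) (f : LaurentSeries A) :
    DoprMonic n b f = opAct n (pOf n b) f := by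
  unfold DoprMonic opAct
  rw [Finset.sum_range_succ]
  have htop : pOf n b n = 1 := by unfold pOf; rw [if_pos rfl]
  rw [htop, one_mul, add_comm]
  congr 1
  refine Finset.sum_nbij' (fun i => n - i) (fun k => n - k) ?_ ?_ ?_ ?_ ?_
  · intro i hi
    simp only [Finset.mem_Icc] at hi
    simp only [Finset.mem_range]
    omega
  · intro k hk
    simp only [Finset.mem_range] at hk
    simp only [Finset.mem_Icc]
    omega
  · intro i hi; beta_reduce; simp only [Finset.mem_Icc] at hi; omega
  · intro k hk; beta_reduce; simp only [Finset.mem_range] at hk; omega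
  · intro i hi
    beta_reduce
    simp only [Finset.mem_Icc] at hi
    have h1 : n - (n - i) = i := by omega
    unfold pOf
    rw [if_neg (by omega), if_pos (by omega), h1]

/-- Reconstruction: an `opAct` with coefficient supports bounded below and monic top
coefficient is a `DoprMonic`. -/
lemma opAct_eq_DoprMonic (n : ℕ) (q : ℕ → LaurentSeries A) (hq : q n = 1)
    (hsupp : ∀ k, k < n → SuppGE (q k) ((k : ℤ) - n)) (f : LaurentSeries A) :
    opAct n q f = DoprMonic n (fun i j => (q (n - i)).coeff j) f := by
  rw [DoprMonic_eq_opAct]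
  unfold opAct
  refine Finset.sum_congr rfl fun k hk => ?_
  simp only [Finset.mem_range] at hk
  congr 1
  rcases eq_or_lt_of_le (show k ≤ n by omega) with h | h
  · subst h
    unfold pOf
    rw [if_pos rfl, hq]
  · unfold pOf
    rw [if_neg (by omega), if_pos h]
    beta_reduce
    have hnk : n - (n - k) = k := by omega
    rw [hnk]
    have hb : SuppGE (q k) (-((n - k : ℕ) : ℤ)) := by
      have := hsupp k h
      have hcast : ((k : ℤ) - n) = (-((n - k : ℕ) : ℤ)) := by omega
      rwa [hcast] at this
    have hex := eq_shiftSeries_of_suppGE hb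
    rw [hex]
    congr 1
    funext l
    congr 1
    omega

/-! ### Iterated Leibniz (existence form) and division by a first-order operator -/

lemma iter_mul (w : LaurentSeries A) (k : ℕ) :
    ∃ u : ℕ → LaurentSeries A,
      (∀ f, lderiv^[k] (w * f) = ∑ j ∈ Finset.range (k + 1), u j * lderiv^[j] f) ∧
      (∀ ν : ℤ, SuppGE w ν → ∀ j, SuppGE (u j) ((j : ℤ) - k + ν)) ∧
      (u k = w) ∧ (∀ j, k < j → u j = 0) := by
  induction k with
  | zero =>
    refine ⟨fun j => if j = 0 then w else 0, ?_, ?_, ?_, ?_⟩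
    · intro f
      simp
    · intro ν hν j
      beta_reduce
      by_cases h : j = 0
      · subst h; rw [if_pos rfl]; simpa using hν
      · rw [if_neg h]; exact suppGE_zero _
    · simp
    · intro j hj; beta_reduce; rw [if_neg (by omega)]
  | succ k ih =>
    obtain ⟨u, hu, hb, ht, hz⟩ := ih
    refine ⟨fun j => lderiv (u j) + (if j = 0 then 0 else u (j - 1)), ?_, ?_, ?_, ?_⟩
    · intro f
      rw [Function.iterate_succ_apply', hu f, lderiv_sum]
      have hterm : ∀ j ∈ Finset.range (k + 1),
          lderiv (u j * lderiv^[j] f) =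
            lderiv (u j) * lderiv^[j] f + u j * lderiv^[j + 1] f := by
        intro j _
        rw [lderiv_mul, ← Function.iterate_succ_apply' lderiv]
      rw [Finset.sum_congr rfl hterm, Finset.sum_add_distrib]
      have h1 : ∑ j ∈ Finset.range (k + 1), lderiv (u j) * lderiv^[j] f =
          ∑ j ∈ Finset.range (k + 2), lderiv (u j) * lderiv^[j] f := by
        rw [Finset.sum_range_succ (n := k + 1), hz (k + 1) (by omega), lderiv_zero,
          zero_mul, add_zero]
      have h2 : ∑ j ∈ Finset.range (k + 1), u j * lderiv^[j + 1] f =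
          ∑ j ∈ Finset.range (k + 2),
            (if j = 0 then 0 else u (j - 1)) * lderiv^[j] f := by
        rw [Finset.sum_range_succ' (fun j =>
          (if j = 0 then (0 : LaurentSeries A) else u (j - 1)) * lderiv^[j] f) (k + 1)]
        simp only [if_pos, zero_mul, add_zero, Nat.add_sub_cancel]
        refine Finset.sum_congr rfl fun i _ => ?_
        rw [if_neg (by omega)]
      rw [h1, h2, ← Finset.sum_add_distrib]
      refine Finset.sum_congr rfl fun j _ => ?_
      beta_reduce
      rw [add_mul]
    · intro ν hν j
      beta_reduce
      refine SuppGE.add ?_ ?_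
      · exact (suppGE_lderiv (hb ν hν j)).mono (by omega)
      · by_cases h : j = 0
        · rw [if_pos h]; exact suppGE_zero _
        · rw [if_neg h]
          exact (hb ν hν (j - 1)).mono (by
            have : ((j - 1 : ℕ) : ℤ) = (j : ℤ) - 1 := by omega
            omega)
    · show lderiv (u (k + 1)) + (if k + 1 = 0 then 0 else u (k + 1 - 1)) = w
      rw [hz (k + 1) (by omega), lderiv_zero, zero_add, if_neg (by omega),
        Nat.add_sub_cancel, ht]
    · intro j hj
      show lderiv (u j) + (if j = 0 then 0 else u (j - 1)) = 0
      rw [hz j (by omega), lderiv_zero, zero_add, if_neg (by omega),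
        hz (j - 1) (by omega)]

/-- Division of a monic operator of order `n+1` by the first-order operator
`g ↦ lderiv g + w * g`. -/
lemma division (w : LaurentSeries A) (hw : SuppGE w (-1)) (N : ℤ) :
    ∀ (n : ℕ) (p : ℕ → LaurentSeries A), (∀ k, SuppGE (p k) ((k : ℤ) - N)) →
    ∃ (q : ℕ → LaurentSeries A) (r : LaurentSeries A),
      (∀ f, opAct (n + 1) p f = opAct n q (lderiv f + w * f) + r * f) ∧
      (∀ k, SuppGE (q k) ((k : ℤ) + 1 - N)) ∧
      (q n = p (n + 1)) ∧ (∀ k, n < k → q k = 0) := by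
  intro n
  induction n with
  | zero =>
    intro p hp
    refine ⟨fun k => if k = 0 then p 1 else 0, p 0 - p 1 * w, ?_, ?_, ?_, ?_⟩
    · intro f
      unfold opAct
      simp only [Finset.sum_range_succ, Finset.sum_range_zero, Function.iterate_zero,
        Function.iterate_one, id_eq, zero_add, if_pos]
      ring
    · intro k
      beta_reduce
      by_cases h : k = 0
      · subst h; rw [if_pos rfl]; exact (hp 1).mono (by omega)
      · rw [if_neg h]; exact suppGE_zero _
    · simp
    · intro k hk; beta_reduce; rw [if_neg (by omega)]
  | succ n ih =>
    intro p hp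
    obtain ⟨u, hu, hub, -, huz⟩ := iter_mul w (n + 1)
    set p' : ℕ → LaurentSeries A := fun k => p k - p (n + 2) * u k with hp'def
    have hp'bound : ∀ k, SuppGE (p' k) ((k : ℤ) - N) := by
      intro k
      refine (hp k).sub ?_
      have h1 := (hp (n + 2)).mul (hub (-1) hw k)
      refine h1.mono ?_
      push_cast
      omega
    obtain ⟨q', r, hq', hq'b, hq't, hq'z⟩ := ih p' hp'bound
    refine ⟨fun k => if k = n + 1 then p (n + 2) else q' k, r, ?_, ?_, ?_, ?_⟩
    · intro f
      have key : opAct (n + 2) p f = opAct (n + 1) p' f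
          + p (n + 2) * lderiv^[n + 1] (lderiv f + w * f) := by
        unfold opAct
        rw [Finset.sum_range_succ (n := n + 2)]
        have hsplit : lderiv^[n + 1] (lderiv f + w * f) =
            lderiv^[n + 2] f + ∑ j ∈ Finset.range (n + 2), u j * lderiv^[j] f := by
          rw [lderiv_iter_add, ← hu f, ← Function.iterate_succ_apply]
        rw [hsplit, mul_add, Finset.mul_sum]
        have : ∀ j ∈ Finset.range (n + 2),
            p' j * lderiv^[j] f = p j * lderiv^[j] f - p (n + 2) * (u j * lderiv^[j] f) := by
          intro j _
          rw [hp'def]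
          ring
        rw [Finset.sum_congr rfl this, Finset.sum_sub_distrib]
        ring
      rw [key, hq' f]
      have hact : opAct (n + 1) (fun k => if k = n + 1 then p (n + 2) else q' k)
          (lderiv f + w * f) = opAct n q' (lderiv f + w * f)
            + p (n + 2) * lderiv^[n + 1] (lderiv f + w * f) := by
        unfold opAct
        rw [Finset.sum_range_succ (n := n + 1)]
        beta_reduce
        rw [if_pos rfl]
        congr 1
        refine Finset.sum_congr rfl fun k hk => ?_
        beta_reduce
        simp only [Finset.mem_range] at hk
        rw [if_neg (by omega)]
      rw [hact]
      ring
    · intro k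
      beta_reduce
      by_cases h : k = n + 1
      · subst h
        rw [if_pos rfl]
        exact (hp (n + 2)).mono (by push_cast; omega)
      · rw [if_neg h]
        exact hq'b k
    · show (if n + 1 = n + 1 then p (n + 2) else q' (n + 1)) = p (n + 2)
      rw [if_pos rfl]
    · intro k hk
      beta_reduce
      rw [if_neg (by omega), hq'z k (by omega)]


/-! ### Foldr of compositions -/

lemma foldr_comp_apply {α : Type*} (l : List (α → α)) (e : α → α) (x : α) :
    (l.foldr (· ∘ ·) e) x = (l.foldr (· ∘ ·) id) (e x) := by
  induction l with
  | nil => rfl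
  | cons g l ih =>
    simp only [List.foldr_cons, Function.comp_apply]
    rw [ih]

/-! ### The main induction -/

theorem aux (A : Type*) [CommRing A] [Algebra ℂ A] :
    ∀ (n : ℕ) (b : ℕ → ℤ → A) (m : Fin n → ℤ), StrictMono m →
    ∀ (a : Fin n → ℕ → A), (∀ i, a i 0 = 1) →
    (∀ i, DoprMonic n b (shiftSeries (m i) (a i)) = 0) →
    ∃ c : Fin n → PowerSeries A, ∀ f : LaurentSeries A,
      DoprMonic n b f =
        ((List.ofFn fun i : Fin n =>
            firstOrderOp (m ⟨n - 1 - (i : ℕ), by omega⟩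
              - (n : ℤ) + ((i : ℕ) + 1 : ℤ)) (c i)).foldr (· ∘ ·) id) f := by
  intro n
  induction n with
  | zero =>
    intro b m hm a ha hsol
    refine ⟨Fin.elim0, fun f => ?_⟩
    rw [List.ofFn_zero, List.foldr_nil]
    unfold DoprMonic
    rw [Finset.Icc_eq_empty (by omega), Finset.sum_empty, add_zero]
    rfl
  | succ n ih =>
    intro b m hm a ha hsol
    obtain ⟨v, hf1v, V, hV0, hvdef, hUV⟩ := shiftSeries_isUnit (m 0) (a 0) (ha 0)
    set f1 : LaurentSeries A := shiftSeries (m 0) (a 0) with hf1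
    set U : LaurentSeries A := HahnSeries.ofPowerSeries ℤ A (PowerSeries.mk (a 0)) with hU
    set w : LaurentSeries A := -(lderiv f1 * v) with hw
    have hvf1 : v * f1 = 1 := by rw [mul_comm]; exact hf1v
    have hLf1 : lderiv f1 + w * f1 = 0 := by
      rw [hw]
      have h : -(lderiv f1 * v) * f1 = -(lderiv f1 * (v * f1)) := by ring
      rw [h, hvf1, mul_one, add_neg_cancel]
    -- decomposition of w
    have hlf1 : lderiv f1 = HahnSeries.single (m 0 - 1) ((m 0) • (1 : A)) * U
        + HahnSeries.single (m 0) 1 * lderiv U := by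
      rw [hf1]
      show lderiv (HahnSeries.single (m 0) (1 : A) * U) = _
      rw [lderiv_mul, lderiv_single, add_comm]
    set W0 : LaurentSeries A := -(lderiv U * V) with hW0
    have hsuppW0 : SuppGE W0 0 := by
      rw [hW0]
      have h := (suppGE_lderiv0 (suppGE_ofPS (PowerSeries.mk (a 0)))).mul hV0
      rw [add_zero] at h
      exact h.neg
    have hwdec : w = -(HahnSeries.single (-1 : ℤ) ((m 0) • (1 : A))) + W0 := by
      rw [hw, hvdef, hlf1, hW0]
      have e1 : (HahnSeries.single (m 0 - 1) ((m 0) • (1:A)) * U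
            + HahnSeries.single (m 0) 1 * lderiv U)
            * (HahnSeries.single (-(m 0)) (1:A) * V)
          = (HahnSeries.single (m 0 - 1) ((m 0) • (1:A)) * HahnSeries.single (-(m 0)) (1:A))
              * (U * V)
            + (HahnSeries.single (m 0) (1:A) * HahnSeries.single (-(m 0)) (1:A))
              * (lderiv U * V) := by ring
      rw [e1]
      rw [show U * V = 1 from hUV]
      rw [HahnSeries.single_mul_single, HahnSeries.single_mul_single]
      rw [show m 0 - 1 + -(m 0) = (-1 : ℤ) by ring, show m 0 + -(m 0) = (0 : ℤ) by ring,
        mul_one, one_mul, HahnSeries.single_zero_one, mul_one, one_mul]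
      ring
    have hsw : SuppGE w (-1) := by
      rw [hwdec]
      exact (suppGE_single (-1) _).neg.add (hsuppW0.mono (by omega))
    set cL : PowerSeries A := PowerSeries.mk (fun l => W0.coeff l) with hcL
    have hcLW0 : HahnSeries.ofPowerSeries ℤ A cL = W0 := eq_ofPS_of_suppGE hsuppW0
    have hsingle_smul : ∀ g : LaurentSeries A,
        (m 0) • (HahnSeries.single (-1 : ℤ) (1 : A) * g)
          = HahnSeries.single (-1 : ℤ) ((m 0) • (1 : A)) * g := by
      intro g
      rw [zsmul_eq_mul,
        show ((m 0 : ℤ) : LaurentSeries A) = HahnSeries.single 0 ((m 0 : ℤ) : A) from by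
          rw [← map_intCast (HahnSeries.C : A →+* HahnSeries ℤ A) (m 0), HahnSeries.C_apply],
        ← mul_assoc, HahnSeries.single_mul_single, zero_add]
      congr 2
      rw [zsmul_eq_mul, mul_one]
    have hL : ∀ g, lderiv g + w * g = firstOrderOp (m 0) cL g := by
      intro g
      unfold firstOrderOp
      rw [hwdec, hcLW0, hsingle_smul g]
      ring
    -- division
    obtain ⟨q, r, hdiv, hqb, hqt, hqz⟩ :=
      division w hsw (((n : ℕ) + 1 : ℕ) : ℤ) n (pOf (n + 1) b) (suppGE_pOf (n + 1) b)
    have hDop : ∀ f, DoprMonic (n + 1) b f = opAct n q (lderiv f + w * f) + r * f := by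
      intro f
      rw [DoprMonic_eq_opAct, hdiv f]
    have hr0 : r = 0 := by
      have h0 := hsol 0
      rw [← hf1, hDop f1, hLf1, opAct_zero, zero_add] at h0
      calc r = r * (f1 * v) := by rw [hf1v, mul_one]
      _ = r * f1 * v := by ring
      _ = 0 := by rw [h0, zero_mul]
    have hQ : ∀ f, DoprMonic (n + 1) b f = opAct n q (lderiv f + w * f) := by
      intro f
      rw [hDop f, hr0, zero_mul, add_zero]
    have hqtop : q n = 1 := by
      rw [hqt]
      unfold pOf
      rw [if_pos rfl]
    have hqsupp : ∀ k, k < n → SuppGE (q k) ((k : ℤ) - (n : ℕ)) := by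
      intro k hk
      exact (hqb k).mono (by push_cast; omega)
    have hQD : ∀ g, opAct n q g = DoprMonic n (fun i j => (q (n - i)).coeff j) g :=
      fun g => opAct_eq_DoprMonic n q hqtop hqsupp g
    -- new exponents and solutions
    have hm'mono : StrictMono (fun i : Fin n => m i.succ - 1) := by
      intro i j hij
      show m i.succ - 1 < m j.succ - 1
      have := hm (Fin.succ_lt_succ_iff.mpr hij)
      omega
    have hdpos : ∀ i : Fin n, 0 < m i.succ - m 0 := by
      intro i
      have := hm (Fin.succ_pos i)
      omega
    have hesolve : ∀ i : Fin n,
        (algebraMap ℂ A (((m i.succ - m 0 : ℤ) : ℂ)⁻¹)) * ((m i.succ - m 0 : ℤ) : A) = 1 := by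
      intro i
      have hne : ((m i.succ - m 0 : ℤ) : ℂ) ≠ 0 :=
        Int.cast_ne_zero.mpr (by have := hdpos i; omega)
      rw [show ((m i.succ - m 0 : ℤ) : A)
          = algebraMap ℂ A ((m i.succ - m 0 : ℤ) : ℂ) from (map_intCast _ _).symm,
        ← map_mul, inv_mul_cancel₀ hne, map_one]
    -- the new solutions
    have hsolF : ∀ i : Fin n,
        opAct n q (lderiv (shiftSeries (m i.succ) (a i.succ))
          + w * shiftSeries (m i.succ) (a i.succ)) = 0 := by
      intro i
      rw [← hQ (shiftSeries (m i.succ) (a i.succ))]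
      exact hsol i.succ
    have hsuppF : ∀ i : Fin n,
        SuppGE (lderiv (shiftSeries (m i.succ) (a i.succ))
          + w * shiftSeries (m i.succ) (a i.succ)) (m i.succ - 1) := by
      intro i
      refine (suppGE_lderiv (suppGE_shiftSeries _ _)).add ?_
      exact (hsw.mul (suppGE_shiftSeries _ _)).mono (by omega)
    have hFcoeff : ∀ i : Fin n,
        (lderiv (shiftSeries (m i.succ) (a i.succ))
          + w * shiftSeries (m i.succ) (a i.succ)).coeff (m i.succ - 1)
        = ((m i.succ - m 0 : ℤ) : A) := by
      intro i
      rw [HahnSeries.coeff_add]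
      have hc1 : (shiftSeries (m i.succ) (a i.succ)).coeff (m i.succ) = 1 := by
        rw [shiftSeries_coeff, if_pos le_rfl, sub_self]
        exact ha i.succ
      have h1 : (lderiv (shiftSeries (m i.succ) (a i.succ))).coeff (m i.succ - 1)
          = (m i.succ) • (1 : A) := by
        rw [lderiv_coeff, show m i.succ - 1 + 1 = m i.succ by ring, hc1]
      have h2 : (w * shiftSeries (m i.succ) (a i.succ)).coeff (m i.succ - 1)
          = -((m 0) • (1 : A)) := by
        have h3 : (HahnSeries.single (-1 : ℤ) ((m 0) • (1:A))
            * shiftSeries (m i.succ) (a i.succ)).coeff (m i.succ - 1)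
            = ((m 0) • (1:A)) * 1 := by
          have h4 := HahnSeries.coeff_single_mul_add (r := (m 0) • (1:A))
            (x := shiftSeries (m i.succ) (a i.succ)) (a := m i.succ) (b := (-1 : ℤ))
          rw [show m i.succ + -1 = m i.succ - 1 by ring] at h4
          rw [h4, hc1]
        have h5 : (W0 * shiftSeries (m i.succ) (a i.succ)).coeff (m i.succ - 1) = 0 := by
          have h6 := hsuppW0.mul (suppGE_shiftSeries (m i.succ) (a i.succ))
          rw [zero_add] at h6
          exact h6 _ (by omega)
        have hrw : w * shiftSeries (m i.succ) (a i.succ)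
            = -(HahnSeries.single (-1 : ℤ) ((m 0) • (1:A)) * shiftSeries (m i.succ) (a i.succ))
              + W0 * shiftSeries (m i.succ) (a i.succ) := by
          rw [hwdec]; ring
        rw [hrw, HahnSeries.coeff_add, HahnSeries.coeff_neg, h3, h5, add_zero, mul_one]
      rw [h1, h2]
      rw [zsmul_eq_mul, zsmul_eq_mul, mul_one, mul_one]
      push_cast
      ring
    -- apply induction hypothesis
    obtain ⟨c', hc'⟩ := ih (fun i j => (q (n - i)).coeff j)
      (fun i : Fin n => m i.succ - 1) hm'mono
      (fun i l => (HahnSeries.C (algebraMap ℂ A (((m i.succ - m 0 : ℤ) : ℂ)⁻¹))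
        * (lderiv (shiftSeries (m i.succ) (a i.succ))
          + w * shiftSeries (m i.succ) (a i.succ))).coeff (m i.succ - 1 + l))
      (by
        intro i
        beta_reduce
        rw [show (m i.succ - 1 + ((0 : ℕ) : ℤ)) = m i.succ - 1 by push_cast; ring]
        rw [HahnSeries.C_apply, HahnSeries.coeff_single_zero_mul, hFcoeff i]
        exact hesolve i)
      (by
        intro i
        have hsupp : SuppGE (HahnSeries.C (algebraMap ℂ A (((m i.succ - m 0 : ℤ) : ℂ)⁻¹))
            * (lderiv (shiftSeries (m i.succ) (a i.succ))
              + w * shiftSeries (m i.succ) (a i.succ))) (m i.succ - 1) := by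
          have h := (suppGE_C (algebraMap ℂ A (((m i.succ - m 0 : ℤ) : ℂ)⁻¹))).mul (hsuppF i)
          rwa [zero_add] at h
        have hex := eq_shiftSeries_of_suppGE hsupp
        rw [← hex, ← hQD, opAct_C_mul, hsolF i, mul_zero])
    -- assemble
    refine ⟨Fin.snoc c' cL, fun f => ?_⟩
    rw [hQ f, hQD, hc' (lderiv f + w * f)]
    have hofn : (List.ofFn fun i : Fin (n + 1) =>
        firstOrderOp (m ⟨n + 1 - 1 - (i : ℕ), by have := i.isLt; omega⟩
          - ((n + 1 : ℕ) : ℤ) + ((i : ℕ) + 1 : ℤ))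
          ((Fin.snoc c' cL : Fin (n + 1) → PowerSeries A) i))
        = (List.ofFn fun j : Fin n =>
            firstOrderOp ((fun i : Fin n => m i.succ - 1) ⟨n - 1 - (j : ℕ),
                by have := j.isLt; omega⟩
              - (n : ℤ) + ((j : ℕ) + 1 : ℤ)) (c' j))
          ++ [fun g => lderiv g + w * g] := by
      rw [List.ofFn_succ', List.concat_eq_append]
      congr 1
      · refine congrArg _ (funext fun j => ?_)
        rw [Fin.snoc_castSucc]
        congr 1
        have hval : (⟨n + 1 - 1 - ((j.castSucc : Fin (n+1)) : ℕ), by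
            have := (j.castSucc : Fin (n+1)).isLt; omega⟩ : Fin (n + 1))
            = (⟨n - 1 - (j : ℕ), by have := j.isLt; omega⟩ : Fin n).succ := by
          apply Fin.ext
          simp only [Fin.coe_castSucc, Fin.val_succ]
          have := j.isLt
          omega
        rw [hval]
        beta_reduce
        rw [Fin.coe_castSucc]
        push_cast
        ring
      · refine congrArg (fun x => [x]) ?_
        funext g
        rw [Fin.snoc_last]
        have hval : (⟨n + 1 - 1 - ((Fin.last n : Fin (n+1)) : ℕ), by
            have := (Fin.last n : Fin (n+1)).isLt; omega⟩ : Fin (n + 1)) = 0 := by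
          apply Fin.ext
          simp [Fin.val_last]
        rw [hval, Fin.val_last,
          show m 0 - ((n + 1 : ℕ) : ℤ) + (((n : ℕ) : ℤ) + 1) = m 0 from by push_cast; ring,
          ← hL g]
    rw [hofn, List.foldr_append]
    conv_rhs => rw [foldr_comp_apply]
    rfl


end Fact0

/-- If the monic operator `D` of order `n` annihilates Laurent series
`f_i = x^{m_i} + a_1^{(i)} x^{m_i+1} + ⋯` for `i = 1, …, n` with `m_1 < ⋯ < m_n`, then with
`ν_i = m_{n+1−i} − n + i` there exist power series `c_1, …, c_n ∈ A[[x]]` such that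
`D = D_1 D_2 ⋯ D_n` where `D_i g = g′ − ν_i x^{−1} g + c_i g`. -/
theorem factorization_into_first_order (A : Type*) [CommRing A] [Algebra ℂ A]
    (n : ℕ) (hn : 1 ≤ n) (b : ℕ → ℤ → A) (m : Fin n → ℤ) (hm : StrictMono m)
    (a : Fin n → ℕ → A) (ha : ∀ i, a i 0 = 1)
    (hsol : ∀ i, DoprMonic n b (shiftSeries (m i) (a i)) = 0) :
    ∃ c : Fin n → PowerSeries A, ∀ f : LaurentSeries A,
      DoprMonic n b f =
        ((List.ofFn fun i : Fin n =>
            firstOrderOp (m ⟨n - 1 - (i : ℕ), by have := i.isLt; omega⟩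
              - (n : ℤ) + ((i : ℕ) + 1 : ℤ)) (c i)).foldr (· ∘ ·) id) f := by
  exact Fact0.aux A n b m hm a ha hsol
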